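/- Let n ≥ 1, let p be an integer with 1 ≤ p ≤ n, let A and D be n×n real matrices, and suppose x ∈ ℝⁿ satisfies x_i − x_j ≥ D(i,j) for all i, j. Define L(i,j) := ⊕_p(l ↦ A(i,l) + D(l,j)) and U(i,j) := ⊕_p(l ↦ A(i,l) − D(j,l)). If A(i,j) < L(i,j) or A(i,j) > U(i,j), then (i,j) is inactive, i.e., (A ⊗_p x)_i ≠ A(i,j) + x_j. -/

import Mathlib

/-- The maxmin-`p` value of `s : Fin n → ℝ`: the `p`-th smallest element (1-indexed) of the
multiset `{s 0, …, s (n-1)}`, counted with multiplicity. -/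
noncomputable def maxmin {n : ℕ} (p : ℕ) (s : Fin n → ℝ) : ℝ :=
  (Multiset.sort (Multiset.map s (Finset.univ : Finset (Fin n)).val) (· ≤ ·)).getD (p - 1) 0

/-- The maxmin-`p` matrix-vector product: `(A ⊗_p x)_i = ⊕_p (j ↦ A i j + x j)`. -/
noncomputable def mmProd {n : ℕ} (p : ℕ) (A : Fin n → Fin n → ℝ) (x : Fin n → ℝ) :
    Fin n → ℝ :=
  fun i => maxmin p (fun j => A i j + x j)

lemma sorted_mono {L : List ℝ} (hL : L.Pairwise (· ≤ ·)) {a b : ℕ} (hab : a ≤ b)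
    (hb : b < L.length) : L[a]'(lt_of_le_of_lt hab hb) ≤ L[b] := by
  rcases lt_or_eq_of_le hab with hlt | rfl
  · have := List.Pairwise.rel_get_of_lt hL (a := ⟨a, lt_of_le_of_lt hab hb⟩) (b := ⟨b, hb⟩)
      (by simpa using hlt)
    simpa using this
  · exact le_refl _

lemma sorted_getD_le_iff {L : List ℝ} (hL : L.Pairwise (· ≤ ·)) {k : ℕ} (hk : k < L.length)
    (v : ℝ) : L.getD k 0 ≤ v ↔ k < L.countP (fun a => decide (a ≤ v)) := by
  rw [List.getD_eq_getElem L 0 hk]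
  constructor
  · intro hle
    have hall : ∀ a ∈ L.take (k+1), a ≤ v := by
      intro a ha
      obtain ⟨m, hm, rfl⟩ := List.mem_iff_getElem.mp ha
      rw [List.getElem_take]
      have hm' : m ≤ k := by simp [List.length_take] at hm; omega
      exact le_trans (sorted_mono hL hm' hk) hle
    have h1 : (L.take (k+1)).countP (fun a => decide (a ≤ v)) = (L.take (k+1)).length := by
      rw [List.countP_eq_length]; intro a ha; simpa using hall a ha
    have h2 : L.countP (fun a => decide (a ≤ v)) =
        (L.take (k+1)).countP (fun a => decide (a ≤ v)) +
        (L.drop (k+1)).countP (fun a => decide (a ≤ v)) := by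
      conv_lhs => rw [← List.take_append_drop (k+1) L]
      rw [List.countP_append]
    have h3 : (L.take (k+1)).length = k + 1 := by simp [List.length_take]; omega
    omega
  · intro hcount
    by_contra hgt
    push_neg at hgt
    have hdrop : (L.drop k).countP (fun a => decide (a ≤ v)) = 0 := by
      rw [List.countP_eq_zero]
      intro a ha
      obtain ⟨m, hm, rfl⟩ := List.mem_iff_getElem.mp ha
      rw [List.getElem_drop]
      simp only [decide_eq_true_eq, not_le]
      have hlen : k + m < L.length := by simp [List.length_drop] at hm; omega
      exact lt_of_lt_of_le hgt (sorted_mono hL (Nat.le_add_right k m) hlen)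
    have h2 : L.countP (fun a => decide (a ≤ v)) =
        (L.take k).countP (fun a => decide (a ≤ v)) +
        (L.drop k).countP (fun a => decide (a ≤ v)) := by
      conv_lhs => rw [← List.take_append_drop k L]
      rw [List.countP_append]
    have h4 := List.countP_le_length (l := L.take k) (p := fun a => decide (a ≤ v))
    have h3 : (L.take k).length ≤ k := by simp [List.length_take]
    omega

lemma maxmin_le_iff {n p : ℕ} (hp1 : 1 ≤ p) (hpn : p ≤ n) (s : Fin n → ℝ) (v : ℝ) :
    maxmin p s ≤ v ↔ p - 1 < (Finset.univ.filter (fun l => s l ≤ v)).card := by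
  set M := Multiset.map s (Finset.univ : Finset (Fin n)).val with hM
  have hlen : (Multiset.sort M (· ≤ ·)).length = n := by
    rw [Multiset.length_sort, hM, Multiset.card_map]
    simp
  have hsorted : (Multiset.sort M (· ≤ ·)).Pairwise (· ≤ ·) := Multiset.pairwise_sort _ _
  have hk : p - 1 < (Multiset.sort M (· ≤ ·)).length := by omega
  rw [maxmin, ← hM, sorted_getD_le_iff hsorted hk]
  have hcount : (Multiset.sort M (· ≤ ·)).countP (fun a => decide (a ≤ v)) =
      (Finset.univ.filter (fun l => s l ≤ v)).card := by
    have h1 : (Multiset.sort M (· ≤ ·)).countP (fun a => decide (a ≤ v)) =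
        Multiset.countP (fun a => a ≤ v) M := by
      have h0 := Multiset.coe_countP (p := fun a => a ≤ v) (Multiset.sort M (· ≤ ·))
      rw [Multiset.sort_eq] at h0
      exact h0.symm
    rw [h1, hM, Multiset.countP_map, ← Finset.filter_val, Finset.card_def]
  rw [hcount]

lemma maxmin_mono {n p : ℕ} (hp1 : 1 ≤ p) (hpn : p ≤ n) {s t : Fin n → ℝ}
    (hst : ∀ l, s l ≤ t l) : maxmin p s ≤ maxmin p t := by
  rw [maxmin_le_iff hp1 hpn]
  have h1 : maxmin p t ≤ maxmin p t := le_refl _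
  rw [maxmin_le_iff hp1 hpn] at h1
  refine lt_of_lt_of_le h1 (Finset.card_le_card ?_)
  intro l hl
  simp only [Finset.mem_filter, Finset.mem_univ, true_and] at hl ⊢
  exact le_trans (hst l) hl

lemma maxmin_add_le {n p : ℕ} (hp1 : 1 ≤ p) (hpn : p ≤ n) (s : Fin n → ℝ) (c : ℝ) :
    maxmin p (fun l => s l + c) ≤ maxmin p s + c := by
  rw [maxmin_le_iff hp1 hpn]
  have h1 : maxmin p s ≤ maxmin p s := le_refl _
  rw [maxmin_le_iff hp1 hpn] at h1
  refine lt_of_lt_of_le h1 (le_of_eq (congrArg _ ?_))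
  ext l
  simp

lemma maxmin_add_const {n p : ℕ} (hp1 : 1 ≤ p) (hpn : p ≤ n) (s : Fin n → ℝ) (c : ℝ) :
    maxmin p (fun l => s l + c) = maxmin p s + c := by
  refine le_antisymm (maxmin_add_le hp1 hpn s c) ?_
  have h := maxmin_add_le hp1 hpn (fun l => s l + c) (-c)
  simp only [add_neg_cancel_right] at h
  linarith

/-- If `A i j < L i j` or `A i j > U i j` (where `L i j := ⊕_p(l ↦ A i l + D l j)` and
`U i j := ⊕_p(l ↦ A i l − D j l)`), then `(i,j)` is inactive with respect to `p` and any
`x` in the zone of `D`: `(A ⊗_p x)_i ≠ A i j + x j`. -/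
theorem inactive_entry_of_LU (n p : ℕ) (hn : 1 ≤ n) (hp1 : 1 ≤ p) (hpn : p ≤ n)
    (A D : Fin n → Fin n → ℝ) (x : Fin n → ℝ)
    (hzone : ∀ i j, x i - x j ≥ D i j)
    (i j : Fin n)
    (h : A i j < maxmin p (fun l => A i l + D l j) ∨
         A i j > maxmin p (fun l => A i l - D j l)) :
    mmProd p A x i ≠ A i j + x j := by
  intro heq
  have hmm : maxmin p (fun l => (A i l + x l) + (-x j)) = A i j := by
    rw [maxmin_add_const hp1 hpn]
    have : maxmin p (fun l => A i l + x l) = A i j + x j := heq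
    rw [this]; ring
  rcases h with hL | hU
  · have hmono : maxmin p (fun l => A i l + D l j) ≤
        maxmin p (fun l => (A i l + x l) + (-x j)) := by
      refine maxmin_mono hp1 hpn (fun l => ?_)
      have := hzone l j
      linarith
    rw [hmm] at hmono
    linarith
  · have hmono : maxmin p (fun l => (A i l + x l) + (-x j)) ≤
        maxmin p (fun l => A i l - D j l) := by
      refine maxmin_mono hp1 hpn (fun l => ?_)
      have := hzone j l
      linarith
    rw [hmm] at hmono
    linarith
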